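/- Let b,m>0 and set u_f := 9bm/2. The functions v_dv(s) := (1/(3b))(1 + tanh(√m s/2)) and v_vd(s) := (1/(3b))(1 − tanh(√m s/2)) each solve the stationary layer equation v'' = m v − u_f v²(1 − b v) on ℝ. Moreover v_dv(s) → 0 as s → −∞ and v_dv(s) → 2/(3b) as s → +∞, while v_vd(s) → 2/(3b) as s → −∞ and v_vd(s) → 0 as s → +∞; in particular, at u = u_f the layer problem possesses a heteroclinic loop between its saddle equilibria v = 0 and v = v_+(u_f) = 2/(3b). -/

import Mathlib

open Real Set Filter

lemma hasDerivAt_tanh' (x : ℝ) : HasDerivAt Real.tanh (1 - Real.tanh x ^ 2) x := by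
  have hc : Real.cosh x ≠ 0 := (Real.cosh_pos x).ne'
  have h := (Real.hasDerivAt_sinh x).div (Real.hasDerivAt_cosh x) hc
  have heq : (∀ y, Real.tanh y = Real.sinh y / Real.cosh y) := fun y => Real.tanh_eq_sinh_div_cosh y
  replace h : HasDerivAt Real.tanh _ x := h.congr_of_eventuallyEq (Filter.Eventually.of_forall fun y => heq y)
  convert h using 1
  have h2 := Real.cosh_sq_sub_sinh_sq x
  rw [Real.tanh_eq_sinh_div_cosh]
  field_simp

lemma tanh_eq_exp' (x : ℝ) : Real.tanh x = (1 - Real.exp (-(2*x))) / (1 + Real.exp (-(2*x))) := by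
  rw [Real.tanh_eq_sinh_div_cosh, Real.sinh_eq, Real.cosh_eq]
  have h1 : Real.exp x ≠ 0 := (Real.exp_pos x).ne'
  have h2 : (0:ℝ) < Real.exp (-(2*x)) := Real.exp_pos _
  rw [show (-(2*x)) = -x + -x by ring, Real.exp_add, Real.exp_neg]
  field_simp

lemma tendsto_tanh_atTop' : Tendsto Real.tanh atTop (nhds 1) := by
  have h0 : Tendsto (fun x : ℝ => Real.exp (-(2*x))) atTop (nhds 0) := by
    apply Real.tendsto_exp_atBot.comp
    exact tendsto_neg_atBot_iff.mpr (tendsto_id.const_mul_atTop two_pos)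
  have h : Tendsto (fun x : ℝ => (1 - Real.exp (-(2*x))) / (1 + Real.exp (-(2*x)))) atTop
      (nhds ((1 - 0) / (1 + 0))) :=
    ((tendsto_const_nhds.sub h0).div (tendsto_const_nhds.add h0) (by norm_num))
  norm_num at h
  exact h.congr fun x => (tanh_eq_exp' x).symm

lemma tendsto_tanh_atBot' : Tendsto Real.tanh atBot (nhds (-1)) := by
  have h : Tendsto (fun x : ℝ => -Real.tanh (-x)) atBot (nhds (-1)) := by
    have := (tendsto_tanh_atTop'.comp
      (tendsto_neg_atBot_atTop : Tendsto (fun x : ℝ => -x) atBot atTop)).neg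
    simpa using this
  refine h.congr fun x => ?_
  rw [Real.tanh_neg]; ring

lemma front_ode (b m ε : ℝ) (hb : 0 < b) (hm : 0 < m) (hε : ε = 1 ∨ ε = -1) (s : ℝ) :
    let v : ℝ → ℝ := fun s => (1/(3*b)) * (1 + ε * Real.tanh (Real.sqrt m * s / 2))
    deriv (deriv v) s = m * v s - (9*b*m/2) * (v s)^2 * (1 - b * v s) := by
  intro v
  set k : ℝ := Real.sqrt m / 2 with hk
  have hinner : ∀ x : ℝ, HasDerivAt (fun s : ℝ => Real.sqrt m * s / 2) k x := by
    intro x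
    simpa [hk, mul_comm] using ((hasDerivAt_id x).const_mul (Real.sqrt m)).div_const 2
  have hT : ∀ x : ℝ, HasDerivAt (fun s : ℝ => Real.tanh (Real.sqrt m * s / 2))
      ((1 - Real.tanh (Real.sqrt m * x / 2) ^ 2) * k) x := fun x =>
    (hasDerivAt_tanh' _).comp x (hinner x)
  have hv : ∀ x : ℝ, HasDerivAt v
      ((1/(3*b)) * (ε * ((1 - Real.tanh (Real.sqrt m * x / 2) ^ 2) * k))) x := by
    intro x
    exact ((((hT x).const_mul ε).const_add 1).const_mul (1/(3*b)))
  have hd1 : deriv v = fun x => (1/(3*b)) * (ε * ((1 - Real.tanh (Real.sqrt m * x / 2) ^ 2) * k)) :=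
    funext fun x => (hv x).deriv
  have hv2 : HasDerivAt (deriv v)
      ((1/(3*b)) * (ε * ((-(2 * Real.tanh (Real.sqrt m * s / 2) *
        ((1 - Real.tanh (Real.sqrt m * s / 2) ^ 2) * k))) * k))) s := by
    rw [hd1]
    have hsq : HasDerivAt (fun x : ℝ => Real.tanh (Real.sqrt m * x / 2) ^ 2)
        (2 * Real.tanh (Real.sqrt m * s / 2) * ((1 - Real.tanh (Real.sqrt m * s / 2) ^ 2) * k)) s := by
      simpa using ((hT s).fun_pow 2)
    exact (((hsq.const_sub 1).mul_const k).const_mul ε).const_mul (1/(3*b))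
  rw [hv2.deriv]
  have hk2 : k^2 = m/4 := by
    rw [hk]; rw [div_pow, Real.sq_sqrt hm.le]; norm_num
  set T := Real.tanh (Real.sqrt m * s / 2)
  show (1/(3*b)) * (ε * ((-(2 * T * ((1 - T ^ 2) * k))) * k))
      = m * ((1/(3*b)) * (1 + ε * T)) - (9*b*m/2) * ((1/(3*b)) * (1 + ε * T))^2 * (1 - b * ((1/(3*b)) * (1 + ε * T)))
  have hb' : b ≠ 0 := hb.ne'
  have hkk : (-(2 * T * ((1 - T ^ 2) * k))) * k = -(2*T*(1-T^2)) * (m/4) := by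
    rw [← hk2]; ring
  rw [hkk]
  rcases hε with rfl | rfl <;> (field_simp; ring)

/-- At the stationary-front value `u_f = 9bm/2`, the layer problem
`v'' = m v − u_f v²(1 − b v)` possesses a heteroclinic loop: the explicit
fronts `v_dv(s) = (1/(3b))(1 + tanh(√m s/2))` and
`v_vd(s) = (1/(3b))(1 − tanh(√m s/2))` connect the saddle equilibria `0` and
`v₊(u_f) = 2/(3b)` in the two directions. -/
theorem stationary_heteroclinic_loop
    (b m : ℝ) (hb : 0 < b) (hm : 0 < m) :
    let uf := 9*b*m/2
    let vdv : ℝ → ℝ := fun s => (1/(3*b)) * (1 + Real.tanh (Real.sqrt m * s / 2))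
    let vvd : ℝ → ℝ := fun s => (1/(3*b)) * (1 - Real.tanh (Real.sqrt m * s / 2))
    -- both fronts solve the stationary layer equation
    (∀ s : ℝ, deriv (deriv vdv) s = m * vdv s - uf * (vdv s)^2 * (1 - b * vdv s)) ∧
    (∀ s : ℝ, deriv (deriv vvd) s = m * vvd s - uf * (vvd s)^2 * (1 - b * vvd s)) ∧
    -- desert-to-vegetation asymptotics
    Filter.Tendsto vdv Filter.atBot (nhds 0) ∧
    Filter.Tendsto vdv Filter.atTop (nhds (2/(3*b))) ∧
    -- vegetation-to-desert asymptotics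
    Filter.Tendsto vvd Filter.atBot (nhds (2/(3*b))) ∧
    Filter.Tendsto vvd Filter.atTop (nhds 0) := by
  intro uf vdv vvd
  have hsm : (0:ℝ) < Real.sqrt m := Real.sqrt_pos.mpr hm
  have hbot : Tendsto (fun s : ℝ => Real.sqrt m * s / 2) atBot atBot := by
    exact (tendsto_id.const_mul_atBot hsm).atBot_div_const two_pos
  have htop : Tendsto (fun s : ℝ => Real.sqrt m * s / 2) atTop atTop := by
    exact (tendsto_id.const_mul_atTop hsm).atTop_div_const two_pos
  have hTbot : Tendsto (fun s : ℝ => Real.tanh (Real.sqrt m * s / 2)) atBot (nhds (-1)) :=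
    tendsto_tanh_atBot'.comp hbot
  have hTtop : Tendsto (fun s : ℝ => Real.tanh (Real.sqrt m * s / 2)) atTop (nhds 1) :=
    tendsto_tanh_atTop'.comp htop
  refine ⟨fun s => ?_, fun s => ?_, ?_, ?_, ?_, ?_⟩
  · have h := front_ode b m 1 hb hm (Or.inl rfl) s
    simp only [one_mul] at h
    exact h
  · have h := front_ode b m (-1) hb hm (Or.inr rfl) s
    simp only [neg_one_mul, ← sub_eq_add_neg] at h
    exact h
  · have h := ((tendsto_const_nhds (α := ℝ) (x := (1:ℝ)) (f := atBot)).add hTbot).const_mul (1/(3*b))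
    have h2 : (1/(3*b)) * (1 + (-1)) = 0 := by ring
    rw [h2] at h
    exact h
  · have h := ((tendsto_const_nhds (α := ℝ) (x := (1:ℝ)) (f := atTop)).add hTtop).const_mul (1/(3*b))
    have h2 : (1/(3*b)) * (1 + 1) = 2/(3*b) := by ring
    rw [h2] at h
    exact h
  · have h := ((tendsto_const_nhds (α := ℝ) (x := (1:ℝ)) (f := atBot)).sub hTbot).const_mul (1/(3*b))
    have h2 : (1/(3*b)) * (1 - (-1)) = 2/(3*b) := by ring
    rw [h2] at h
    exact h
  · have h := ((tendsto_const_nhds (α := ℝ) (x := (1:ℝ)) (f := atTop)).sub hTtop).const_mul (1/(3*b))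
    have h2 : (1/(3*b)) * (1 - 1) = 0 := by ring
    rw [h2] at h
    exact h
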